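/- Let τ > 0, η > 0, β ≥ 0, let w_1,…,w_N > 0 and I_1,…,I_N ∈ ℝ, and let R_1,…,R_N : ℝ → ℝ and G : ℝ → ℝ be differentiable functions such that η + G(t) ≠ 0 and τ·R_i′(t) = −R_i(t) + (β·R_i(t) + I_i)/(η + G(t)) for all i and all t. Define S(t) = ∑_{j=1}^N w_j R_j(t) and, where S(t) ≠ 0, ρ_i(t) = w_i·R_i(t)/S(t). Then for every i and every t with S(t) ≠ 0, τ·ρ_i′(t) = w_i·( I_i/(S(t)(η + G(t))) − R_i(t)·(∑_{j=1}^N w_j I_j)/(S(t)²(η + G(t))) ). -/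

import Mathlib

/-- Along any trajectory of the RDN excitatory dynamics with inputs,
`τ R_i' = -R_i + (β R_i + I_i)/(η + G)`, the normalized proportions
`ρ_i = w_i R_i / S` (with `S = ∑_j w_j R_j`) satisfy
`τ ρ_i' = w_i (I_i/(S(η+G)) - R_i (∑_j w_j I_j)/(S²(η+G)))`
wherever `S ≠ 0`. -/
theorem rdn_proportions_derivative (N : ℕ) (τ β η : ℝ) (w I : Fin N → ℝ)
    (hτ : 0 < τ) (hη : 0 < η) (hβ : 0 ≤ β) (hw : ∀ j, 0 < w j)
    (R : Fin N → ℝ → ℝ) (G : ℝ → ℝ)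
    (hRdiff : ∀ i, Differentiable ℝ (R i)) (hGdiff : Differentiable ℝ G)
    (hG : ∀ t, η + G t ≠ 0)
    (hode : ∀ i, ∀ t : ℝ,
      τ * deriv (R i) t = -R i t + (β * R i t + I i) / (η + G t)) :
    ∀ i, ∀ t : ℝ, (∑ j, w j * R j t) ≠ 0 →
      τ * deriv (fun s => w i * R i s / ∑ j, w j * R j s) t =
        w i * (I i / ((∑ j, w j * R j t) * (η + G t)) -
          R i t * (∑ j, w j * I j) /
            ((∑ j, w j * R j t) ^ 2 * (η + G t))) := by
  intro i t hS
  have hRi : HasDerivAt (R i) (deriv (R i) t) t := (hRdiff i t).hasDerivAt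
  have hSd : HasDerivAt (fun s => ∑ j, w j * R j s)
      (∑ j, w j * deriv (R j) t) t := by
    apply HasDerivAt.fun_sum
    intro j _
    exact ((hRdiff j t).hasDerivAt).const_mul (w j)
  have hq : HasDerivAt (fun s => w i * R i s / ∑ j, w j * R j s)
      ((w i * deriv (R i) t * (∑ j, w j * R j t) -
        w i * R i t * ∑ j, w j * deriv (R j) t) / (∑ j, w j * R j t) ^ 2) t :=
    (hRi.const_mul (w i)).div hSd hS
  rw [hq.deriv]
  have hτS : τ * ∑ j, w j * deriv (R j) t =
      -(∑ j, w j * R j t) + (β * (∑ j, w j * R j t) + ∑ j, w j * I j) / (η + G t) := by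
    rw [Finset.mul_sum]
    have : ∀ j ∈ Finset.univ, τ * (w j * deriv (R j) t)
        = w j * (-R j t + (β * R j t + I j) / (η + G t)) := by
      intro j _
      rw [show τ * (w j * deriv (R j) t) = w j * (τ * deriv (R j) t) by ring, hode j t]
    rw [Finset.sum_congr rfl this]
    calc ∑ j, w j * (-R j t + (β * R j t + I j) / (η + G t))
        = ∑ j, (-(w j * R j t) + (w j * (β * R j t + I j)) / (η + G t)) := by
          refine Finset.sum_congr rfl fun j _ => ?_
          rw [mul_add, mul_neg, mul_div_assoc]
      _ = -(∑ j, w j * R j t) + (∑ j, w j * (β * R j t + I j)) / (η + G t) := by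
          rw [Finset.sum_add_distrib, Finset.sum_neg_distrib, ← Finset.sum_div]
      _ = -(∑ j, w j * R j t) +
          (β * (∑ j, w j * R j t) + ∑ j, w j * I j) / (η + G t) := by
          congr 1
          rw [Finset.mul_sum, ← Finset.sum_add_distrib]
          exact congrArg (· / (η + G t)) (Finset.sum_congr rfl fun j _ => by ring)
  have hG' := hG t
  set S := ∑ j, w j * R j t with hSdef
  set D := ∑ j, w j * deriv (R j) t with hDdef
  set K := ∑ j, w j * I j with hKdef
  have h1 := hode i t
  have key : τ * ((w i * deriv (R i) t * S - w i * R i t * D) / S ^ 2)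
      = (w i * (τ * deriv (R i) t) * S - w i * R i t * (τ * D)) / S ^ 2 := by
    field_simp
  rw [key, h1, hτS]
  field_simp
  ring
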